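/- Let x = ρ̄^∞(1) be the fixed point of the substitution ρ̄ : k ↦ 1·0·0·0·(pk) on ℕ₀ (so ρ̄ has constant length 5 and x starts with ρ̄ⁿ(1) for all n). Define g(n) = Σ_{j=1}^{n} (−1)^{j+1} x_j. Then for every k ≥ 0 and every n with 5^k ≤ n ≤ 5^{k+1} − 1, one has p^k ≤ g(n) ≤ g(5^k) = Σ_{m=0}^{k} p^m. -/

import Mathlib

def applyN (σ : ℕ → List ℕ) (w : List ℕ) : List ℕ := w.flatMap σ

lemma lenApply (p : ℕ) (ρbar : ℕ → List ℕ) (hρ : ∀ k, ρbar k = [1,0,0,0,p*k])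
    (l : List ℕ) : (applyN ρbar l).length = 5 * l.length := by
  induction l with
  | nil => simp [applyN]
  | cons a t ih =>
    simp only [applyN, List.flatMap_cons, List.length_append, hρ, List.length_cons] at *
    simp at *
    omega

lemma getApply (p : ℕ) (ρbar : ℕ → List ℕ) (hρ : ∀ k, ρbar k = [1,0,0,0,p*k])
    (l : List ℕ) (j i : ℕ) (hj : j < l.length) (hi : i < 5) :
    (applyN ρbar l).getD (5*j+i) 0 = (ρbar (l.getD j 0)).getD i 0 := by
  induction l generalizing j with
  | nil => simp at hj
  | cons a t ih =>
    have hcons : applyN ρbar (a :: t) = ρbar a ++ applyN ρbar t := by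
      simp [applyN]
    cases j with
    | zero =>
      rw [hcons]
      rw [List.getD_append _ _ _ _ (by rw [hρ]; simpa using hi)]
      simp
    | succ j' =>
      rw [hcons]
      have hlen : (ρbar a).length = 5 := by rw [hρ]; simp
      have hidx : 5*(j'+1)+i = (ρbar a).length + (5*j'+i) := by rw [hlen]; ring
      rw [hidx, List.getD_append_right _ _ _ _ (by omega)]
      have : (ρbar a).length + (5*j'+i) - (ρbar a).length = 5*j'+i := by omega
      rw [this, ih j' (by simpa using Nat.lt_of_succ_lt_succ hj)]
      simp

lemma wlen (p : ℕ) (ρbar : ℕ → List ℕ) (hρ : ∀ k, ρbar k = [1,0,0,0,p*k])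
    (n : ℕ) : ((applyN ρbar)^[n] [1]).length = 5 ^ n := by
  induction n with
  | zero => simp
  | succ n ih =>
    rw [Function.iterate_succ_apply', lenApply p ρbar hρ, ih, pow_succ, Nat.mul_comm]

lemma xstep (p : ℕ) (ρbar : ℕ → List ℕ) (hρ : ∀ k, ρbar k = [1,0,0,0,p*k])
    (x : ℕ → ℕ)
    (hx : ∀ (n j : ℕ), j < 5 ^ n → x j = ((applyN ρbar)^[n] [1]).getD j 0)
    (j i : ℕ) (hi : i < 5) : x (5*j+i) = [1,0,0,0,p * x j].getD i 0 := by
  have hjn : j < 5 ^ j := Nat.lt_pow_self (by norm_num : 1 < 5)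
  have h1 : 5*j+i < 5 ^ (j+1) := by
    have : 5 ^ (j+1) = 5 * 5 ^ j := by rw [pow_succ, Nat.mul_comm]
    omega
  have e1 := hx (j+1) (5*j+i) h1
  have e2 := hx j j hjn
  rw [Function.iterate_succ_apply'] at e1
  rw [e1, getApply p ρbar hρ _ j i (by rw [wlen p ρbar hρ]; exact hjn) hi, ← e2, hρ]

theorem stmt13 (p : ℕ) (hp : 2 ≤ p)
    (ρbar : ℕ → List ℕ) (hρbar : ∀ k, ρbar k = [1, 0, 0, 0, p * k])
    (x : ℕ → ℕ)
    (hx : ∀ (n j : ℕ), j < 5 ^ n → x j = ((applyN ρbar)^[n] [1]).getD j 0)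
    (g : ℕ → ℤ)
    (hg : ∀ n, g n = ∑ j ∈ Finset.range n, (-1 : ℤ) ^ j * (x j : ℤ)) :
    ∀ k n : ℕ, 5 ^ k ≤ n → n ≤ 5 ^ (k + 1) - 1 →
      (p : ℤ) ^ k ≤ g n ∧ g n ≤ g (5 ^ k) ∧
      g (5 ^ k) = ∑ m ∈ Finset.range (k + 1), (p : ℤ) ^ m := by
  -- letter facts
  have X0 : ∀ j, x (5*j) = 1 := fun j => by simpa using xstep p ρbar hρbar x hx j 0 (by norm_num)
  have X1 : ∀ j, x (5*j+1) = 0 := fun j => by simpa using xstep p ρbar hρbar x hx j 1 (by norm_num)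
  have X2 : ∀ j, x (5*j+2) = 0 := fun j => by simpa using xstep p ρbar hρbar x hx j 2 (by norm_num)
  have X3 : ∀ j, x (5*j+3) = 0 := fun j => by simpa using xstep p ρbar hρbar x hx j 3 (by norm_num)
  have X4 : ∀ j, x (5*j+4) = p * x j := fun j => by simpa using xstep p ρbar hρbar x hx j 4 (by norm_num)
  have x0 : x 0 = 1 := by simpa using X0 0
  have G0 : g 0 = 0 := by simp [hg]
  have Gsucc : ∀ a b : ℕ, b = a + 1 → g b = g a + (-1)^a * (x a : ℤ) := by
    intro a b hb; subst hb; simp [hg, Finset.sum_range_succ]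
  -- block sums
  have key : ∀ j, (g (5*j+1) = g (5*j) + (-1)^j ∧ g (5*j+2) = g (5*j) + (-1)^j ∧
      g (5*j+3) = g (5*j) + (-1)^j ∧ g (5*j+4) = g (5*j) + (-1)^j) ∧
      g (5*j+5) = g (5*j) + (-1)^j * (1 + (p:ℤ) * (x j : ℤ)) := by
    intro j
    have e0 : ((-1:ℤ))^(5*j) = (-1)^j := by rw [pow_mul]; norm_num
    have e1 : ((-1:ℤ))^(5*j+1) = -(-1)^j := by rw [pow_succ, e0]; ring
    have e2 : ((-1:ℤ))^(5*j+2) = (-1)^j := by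
      rw [show 5*j+2 = (5*j+1)+1 by omega, pow_succ, e1]; ring
    have e3 : ((-1:ℤ))^(5*j+3) = -(-1)^j := by
      rw [show 5*j+3 = (5*j+2)+1 by omega, pow_succ, e2]; ring
    have e4 : ((-1:ℤ))^(5*j+4) = (-1)^j := by
      rw [show 5*j+4 = (5*j+3)+1 by omega, pow_succ, e3]; ring
    have c1 := Gsucc (5*j) (5*j+1) rfl
    have c2 := Gsucc (5*j+1) (5*j+2) (by omega)
    have c3 := Gsucc (5*j+2) (5*j+3) (by omega)
    have c4 := Gsucc (5*j+3) (5*j+4) (by omega)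
    have c5 := Gsucc (5*j+4) (5*j+5) (by omega)
    rw [e0, X0 j] at c1
    rw [e1, X1 j] at c2
    rw [e2, X2 j] at c3
    rw [e3, X3 j] at c4
    rw [e4, X4 j] at c5
    push_cast at c1 c2 c3 c4 c5
    refine ⟨⟨by linarith, by linarith, by linarith, by linarith⟩, by rw [c5, c4, c3, c2, c1]; ring⟩
  -- g(5n) = e(n) + p g(n)
  have GE : ∀ n, g (5*n) = (if Even n then 0 else 1) + (p:ℤ) * g n := by
    intro n
    induction n with
    | zero => norm_num [G0]
    | succ n ih =>
      have hk := (key n).2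
      have hs := Gsucc n (n+1) rfl
      have h5 : 5*(n+1) = 5*n+5 := by ring
      rw [h5, hk, ih, hs]
      by_cases h : Even n
      · rw [if_pos h, if_neg (by simp [Nat.even_add_one, h]), h.neg_one_pow]; ring
      · rw [if_neg h, if_pos (by simp [Nat.even_add_one, h]),
          ((Nat.not_even_iff_odd.1 h)).neg_one_pow]; ring
  have G5 : ∀ k, g (5^(k+1)) = 1 + (p:ℤ) * g (5^k) := by
    intro k
    have hodd : ¬ Even (5^k) := by
      simp only [Nat.even_pow]
      rintro ⟨h, -⟩
      exact absurd h (by decide)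
    rw [show (5:ℕ)^(k+1) = 5*5^k by rw [pow_succ, Nat.mul_comm], GE, if_neg hodd]
  have g1 : g 1 = 1 := by rw [Gsucc 0 1 rfl, G0, x0]; norm_num
  have Gsum : ∀ k, g (5^k) = ∑ m ∈ Finset.range (k+1), (p:ℤ)^m := by
    intro k
    induction k with
    | zero => simpa using g1
    | succ k ih =>
      have hs : ∑ m ∈ Finset.range (k+1+1), (p:ℤ)^m
          = 1 + (p:ℤ) * ∑ m ∈ Finset.range (k+1), (p:ℤ)^m := by
        rw [Finset.sum_range_succ' (fun m => (p:ℤ)^m) (k+1), Finset.mul_sum]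
        simp only [pow_succ, pow_zero]
        rw [add_comm]
        congr 1
        exact Finset.sum_congr rfl fun i _ => by ring
      rw [G5, ih, hs]
  -- main induction
  have main : ∀ k n : ℕ, 5^k ≤ n → n ≤ 5^(k+1) - 1 → (p:ℤ)^k ≤ g n ∧ g n ≤ g (5^k) := by
    intro k
    induction k with
    | zero =>
      intro n h1 h2
      obtain ⟨⟨k1, k2, k3, k4⟩, -⟩ := key 0
      norm_num [G0] at k1 k2 k3 k4
      have h1' : 1 ≤ n := by simpa using h1
      have h2' : n ≤ 4 := by norm_num at h2; omega
      have hgn : g n = 1 := by interval_cases n <;> assumption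
      norm_num [hgn, k1]
    | succ k ih =>
      intro n h1 h2
      have h5k : (5:ℕ)^(k+1) = 5*5^k := by rw [pow_succ, Nat.mul_comm]
      have h5k2 : (5:ℕ)^(k+2) = 5*5^(k+1) := by rw [pow_succ, Nat.mul_comm]
      obtain ⟨j, r, hr5, hn⟩ : ∃ j r, r < 5 ∧ n = 5*j + r :=
        ⟨n/5, n%5, Nat.mod_lt _ (by norm_num), by omega⟩
      subst hn
      have hjb1 : 5^k ≤ j := by omega
      have hjb2 : j ≤ 5^(k+1) - 1 := by
        have hp1 : (1:ℕ) ≤ 5^(k+1) := Nat.one_le_pow _ _ (by norm_num)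
        omega
      obtain ⟨ihl, ihu⟩ := ih j hjb1 hjb2
      have hgj := GE j
      obtain ⟨⟨k1, k2, k3, k4⟩, _⟩ := key j
      have h01 : ((if Even j then (0:ℤ) else 1) = 0 ∧ ((-1:ℤ))^j = 1) ∨
          ((if Even j then (0:ℤ) else 1) = 1 ∧ ((-1:ℤ))^j = -1) := by
        by_cases h : Even j
        · exact Or.inl ⟨if_pos h, h.neg_one_pow⟩
        · exact Or.inr ⟨if_neg h, ((Nat.not_even_iff_odd.1 h)).neg_one_pow⟩
      have hbounds : (p:ℤ) * g j ≤ g (5*j+r) ∧ g (5*j+r) ≤ (p:ℤ) * g j + 1 := by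
        interval_cases r <;>
          rcases h01 with ⟨q1, q2⟩ | ⟨q1, q2⟩ <;>
          rw [q1] at hgj <;>
          simp only [Nat.add_zero, k1, k2, k3, k4, q2, hgj] <;> constructor <;> linarith
      have hpk : (p:ℤ)^(k+1) = (p:ℤ) * (p:ℤ)^k := by ring
      have hpnn : (0:ℤ) ≤ (p:ℤ) := by positivity
      constructor
      · have := mul_le_mul_of_nonneg_left ihl hpnn
        linarith [hbounds.1]
      · have := mul_le_mul_of_nonneg_left ihu hpnn
        rw [G5 k]
        linarith [hbounds.2]
  intro k n h1 h2
  exact ⟨(main k n h1 h2).1, (main k n h1 h2).2, Gsum k⟩
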